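/- In a trim lattice, every element lying on some chain of maximum length (i.e., every element of the spine) is left modular. -/

import Mathlib

variable {α : Type*}

/-- An element is join-irreducible if it is not the minimum and is not a join
of two strictly smaller elements. -/
def JoinIrred [Lattice α] (a : α) : Prop :=
  ¬ IsBot a ∧ ∀ b c : α, b < a → c < a → b ⊔ c ≠ a

/-- An element is meet-irreducible if it is not the maximum and is not a meet
of two strictly larger elements. -/
def MeetIrred [Lattice α] (a : α) : Prop :=
  ¬ IsTop a ∧ ∀ b c : α, a < b → a < c → b ⊓ c ≠ a

/-- An element `x` is left modular if `(y ⊔ x) ⊓ z = y ⊔ (x ⊓ z)` for all `y < z`. -/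
def LeftModular [Lattice α] (x : α) : Prop :=
  ∀ y z : α, y < z → (y ⊔ x) ⊓ z = y ⊔ (x ⊓ z)

/-- A maximal chain `⊥ = x 0 ⋖ x 1 ⋖ ⋯ ⋖ x n = ⊤` all of whose elements are left modular. -/
def IsLMChain [Lattice α] {n : ℕ} (x : Fin (n + 1) → α) : Prop :=
  IsBot (x 0) ∧ IsTop (x (Fin.last n)) ∧ (∀ i : Fin n, x i.castSucc ⋖ x i.succ) ∧
    ∀ i, LeftModular (x i)

/-- A finite lattice is trim if it has a left modular maximal chain of `n + 1` elements,
exactly `n` join-irreducibles and exactly `n` meet-irreducibles. -/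
def Trim (α : Type*) [Lattice α] [Finite α] : Prop :=
  ∃ (n : ℕ) (x : Fin (n + 1) → α), IsLMChain x ∧
    Nat.card {v : α // JoinIrred v} = n ∧ Nat.card {v : α // MeetIrred v} = n

/-- The spine of a finite lattice: elements lying on some chain of maximum length. -/
def Spine [Lattice α] [Finite α] (a : α) : Prop :=
  ∃ C : Set α, a ∈ C ∧ IsChain (· ≤ ·) C ∧
    ∀ D : Set α, IsChain (· ≤ ·) D → D.ncard ≤ C.ncard

section Helpers

/-- Every pair `y < z` admits a join-irreducible below `z` but not below `y`. -/
lemma exists_joinIrred [Lattice α] [Finite α] :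
    ∀ z y : α, y < z → ∃ j : α, JoinIrred j ∧ j ≤ z ∧ ¬ j ≤ y := by
  intro z
  induction z using WellFoundedLT.induction with
  | _ z IH =>
    intro y hyz
    by_cases hz : JoinIrred z
    · exact ⟨z, hz, le_rfl, hyz.not_ge⟩
    · by_cases hbz : IsBot z
      · exact absurd (hbz y) hyz.not_ge
      · have hex : ∃ b c : α, b < z ∧ c < z ∧ b ⊔ c = z := by
          by_contra hno
          push_neg at hno
          exact hz ⟨hbz, fun b c hb hc => hno b c hb hc⟩
        obtain ⟨b, c, hb, hc, hbc⟩ := hex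
        have hone : ¬ b ≤ y ∨ ¬ c ≤ y := by
          by_contra hcon
          push_neg at hcon
          exact hyz.not_ge (hbc ▸ sup_le hcon.1 hcon.2)
        rcases hone with hby | hcy
        · obtain ⟨j, hj, hj1, hj2⟩ := IH b hb (y ⊓ b)
            (lt_of_le_of_ne inf_le_right fun hh => hby (hh ▸ inf_le_left))
          exact ⟨j, hj, hj1.trans hb.le, fun hh => hj2 (le_inf hh hj1)⟩
        · obtain ⟨j, hj, hj1, hj2⟩ := IH c hc (y ⊓ c)
            (lt_of_le_of_ne inf_le_right fun hh => hcy (hh ▸ inf_le_left))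
          exact ⟨j, hj, hj1.trans hc.le, fun hh => hj2 (le_inf hh hj1)⟩

/-- Every pair `y < z` admits a meet-irreducible above `y` but not above `z`. -/
lemma exists_meetIrred [Lattice α] [Finite α] :
    ∀ y z : α, y < z → ∃ m : α, MeetIrred m ∧ y ≤ m ∧ ¬ z ≤ m := by
  intro y
  induction y using WellFoundedGT.induction with
  | _ y IH =>
    intro z hyz
    by_cases hy : MeetIrred y
    · exact ⟨y, hy, le_rfl, hyz.not_ge⟩
    · by_cases hty : IsTop y
      · exact absurd (hty z) hyz.not_ge
      · have hex : ∃ b c : α, y < b ∧ y < c ∧ b ⊓ c = y := by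
          by_contra hno
          push_neg at hno
          exact hy ⟨hty, fun b c hb hc => hno b c hb hc⟩
        obtain ⟨b, c, hb, hc, hbc⟩ := hex
        have hone : ¬ z ≤ b ∨ ¬ z ≤ c := by
          by_contra hcon
          push_neg at hcon
          exact hyz.not_ge (hbc ▸ le_inf hcon.1 hcon.2)
        rcases hone with hzb | hzc
        · obtain ⟨m, hm, hm1, hm2⟩ := IH b hb (z ⊔ b)
            (lt_of_le_of_ne le_sup_right fun hh => hzb (hh ▸ le_sup_left))
          exact ⟨m, hm, hb.le.trans hm1, fun hh => hm2 (sup_le hh hm1)⟩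
        · obtain ⟨m, hm, hm1, hm2⟩ := IH c hc (z ⊔ c)
            (lt_of_le_of_ne le_sup_right fun hh => hzc (hh ▸ le_sup_left))
          exact ⟨m, hm, hc.le.trans hm1, fun hh => hm2 (sup_le hh hm1)⟩

lemma fin_succ_le_castSucc {n : ℕ} {i j : Fin n} (h : (i : ℕ) < (j : ℕ)) :
    (i.succ : Fin (n + 1)) ≤ j.castSucc := by
  rw [Fin.le_def]
  simpa using h

/-- A monotone predicate on `Fin (n+1)` which fails at `0` and holds at `Fin.last n`
crosses somewhere. -/
lemma crossing {n : ℕ} {P : Fin (n + 1) → Prop}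
    (_hmono : ∀ i j : Fin (n + 1), i ≤ j → P i → P j)
    (h0 : ¬ P 0) (hlast : P (Fin.last n)) :
    ∃ i : Fin n, ¬ P i.castSucc ∧ P i.succ := by
  classical
  set F : Finset (Fin (n + 1)) := Finset.univ.filter P with hF
  have hne : F.Nonempty := ⟨Fin.last n, by simp [hF, hlast]⟩
  have hPmin : P (F.min' hne) := (Finset.mem_filter.1 (F.min'_mem hne)).2
  have hminne : F.min' hne ≠ 0 := fun hh => h0 (hh ▸ hPmin)
  obtain ⟨j, hj⟩ := Fin.exists_succ_eq_of_ne_zero hminne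
  refine ⟨j, ?_, hj ▸ hPmin⟩
  intro hPc
  have h1 : F.min' hne ≤ j.castSucc :=
    F.min'_le _ (Finset.mem_filter.2 ⟨Finset.mem_univ _, hPc⟩)
  rw [← hj] at h1
  exact absurd h1 (Fin.castSucc_lt_succ (i := j)).not_ge

lemma crossing_unique {n : ℕ} {P : Fin (n + 1) → Prop}
    (hmono : ∀ i j : Fin (n + 1), i ≤ j → P i → P j) {i i' : Fin n}
    (h1 : ¬ P i.castSucc) (h2 : P i.succ) (h1' : ¬ P i'.castSucc) (h2' : P i'.succ) :
    i = i' := by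
  by_contra hne
  have hne' : (i : ℕ) ≠ (i' : ℕ) := fun hh => hne (Fin.ext hh)
  rcases hne'.lt_or_gt with h | h
  · exact h1' (hmono _ _ (fin_succ_le_castSucc h) h2)
  · exact h1 (hmono _ _ (fin_succ_le_castSucc h) h2')

end Helpers

/-- Every element of the spine of a trim lattice is left modular. -/
theorem spine_left_modular [Lattice α] [Finite α] (h : Trim α) (a : α) (ha : Spine a) :
    LeftModular a := by
  classical
  obtain ⟨n, x, ⟨hbot, htop, hcov, hLM⟩, hJcard, hMcard⟩ := h
  obtain ⟨C, haC, hCch, hCmax⟩ := ha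
  -- basic facts about the chain x
  have hxs : StrictMono x := Fin.strictMono_iff_lt_succ.2 fun i => (hcov i).lt
  have hxm : Monotone x := hxs.monotone
  -- levels of join-irreducibles
  have hlevJ : ∀ j : α, JoinIrred j → ∃ i : Fin n, ¬ j ≤ x i.castSucc ∧ j ≤ x i.succ := by
    intro j hj
    refine crossing (P := fun i => j ≤ x i) ?_ ?_ (htop j)
    · exact fun i i' hii' hP => hP.trans (hxm hii')
    · exact fun hle => hj.1 fun b => hle.trans (hbot b)
  have hlevM : ∀ m : α, MeetIrred m → ∃ i : Fin n, x i.castSucc ≤ m ∧ ¬ x i.succ ≤ m := by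
    intro m hm
    have := crossing (P := fun i => ¬ x i ≤ m)
      (fun i i' hii' hP hc => hP ((hxm hii').trans hc))
      (not_not.2 ((hbot m)))
      (fun hc => hm.1 fun b => (htop b).trans hc)
    obtain ⟨i, h1, h2⟩ := this
    exact ⟨i, not_not.1 h1, h2⟩
  -- the unique join-irreducible at each level
  have hjj : ∀ i : Fin n, ∃ j : α, JoinIrred j ∧ j ≤ x i.succ ∧ ¬ j ≤ x i.castSucc ∧
      ∀ j' : α, JoinIrred j' → j' ≤ x i.succ → ¬ j' ≤ x i.castSucc → j' = j := by
    -- the level map on join-irreducibles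
    have hJmono : ∀ (j : α), ∀ i i' : Fin (n + 1), i ≤ i' → j ≤ x i → j ≤ x i' :=
      fun j i i' hii' hP => hP.trans (hxm hii')
    let φ : {v : α // JoinIrred v} → Fin n := fun v => (hlevJ v.1 v.2).choose
    have hφ : ∀ v : {v : α // JoinIrred v},
        ¬ v.1 ≤ x (φ v).castSucc ∧ v.1 ≤ x (φ v).succ := fun v => (hlevJ v.1 v.2).choose_spec
    have hφchar : ∀ (v : {v : α // JoinIrred v}) (i : Fin n),
        v.1 ≤ x i.succ → ¬ v.1 ≤ x i.castSucc → φ v = i := by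
      intro v i h1 h2
      exact crossing_unique (hJmono v.1) (hφ v).1 (hφ v).2 h2 h1
    have hφsurj : Function.Surjective φ := by
      intro i
      obtain ⟨j, hj, hj1, hj2⟩ := exists_joinIrred (x i.succ) (x i.castSucc) (hcov i).lt
      exact ⟨⟨j, hj⟩, hφchar ⟨j, hj⟩ i hj1 hj2⟩
    haveI : Fintype {v : α // JoinIrred v} := Fintype.ofFinite _
    have eJ : {v : α // JoinIrred v} ≃ Fin n :=
      Fintype.equivFinOfCardEq (by rw [← Nat.card_eq_fintype_card, hJcard])
    have hφinj : Function.Injective φ :=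
      (Finite.injective_iff_surjective_of_equiv eJ).2 hφsurj
    intro i
    obtain ⟨j, hj, hj1, hj2⟩ := exists_joinIrred (x i.succ) (x i.castSucc) (hcov i).lt
    refine ⟨j, hj, hj1, hj2, ?_⟩
    intro j' hj' h1 h2
    have : φ ⟨j', hj'⟩ = φ ⟨j, hj⟩ := by
      rw [hφchar ⟨j', hj'⟩ i h1 h2, hφchar ⟨j, hj⟩ i hj1 hj2]
    exact congrArg Subtype.val (hφinj this)
  -- the unique meet-irreducible at each level
  have hmm : ∀ i : Fin n, ∃ m : α, MeetIrred m ∧ x i.castSucc ≤ m ∧ ¬ x i.succ ≤ m ∧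
      ∀ m' : α, MeetIrred m' → x i.castSucc ≤ m' → ¬ x i.succ ≤ m' → m' = m := by
    have hMmono : ∀ (m : α), ∀ i i' : Fin (n + 1), i ≤ i' → ¬ x i ≤ m → ¬ x i' ≤ m :=
      fun m i i' hii' hP hc => hP ((hxm hii').trans hc)
    let ψ : {v : α // MeetIrred v} → Fin n := fun v => (hlevM v.1 v.2).choose
    have hψ : ∀ v : {v : α // MeetIrred v},
        x (ψ v).castSucc ≤ v.1 ∧ ¬ x (ψ v).succ ≤ v.1 := fun v => (hlevM v.1 v.2).choose_spec
    have hψchar : ∀ (v : {v : α // MeetIrred v}) (i : Fin n),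
        x i.castSucc ≤ v.1 → ¬ x i.succ ≤ v.1 → ψ v = i := by
      intro v i h1 h2
      exact crossing_unique (P := fun i => ¬ x i ≤ v.1) (hMmono v.1)
        (not_not.2 (hψ v).1) (hψ v).2 (not_not.2 h1) h2
    have hψsurj : Function.Surjective ψ := by
      intro i
      obtain ⟨m, hm, hm1, hm2⟩ := exists_meetIrred (x i.castSucc) (x i.succ) (hcov i).lt
      exact ⟨⟨m, hm⟩, hψchar ⟨m, hm⟩ i hm1 hm2⟩
    haveI : Fintype {v : α // MeetIrred v} := Fintype.ofFinite _
    have eM : {v : α // MeetIrred v} ≃ Fin n :=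
      Fintype.equivFinOfCardEq (by rw [← Nat.card_eq_fintype_card, hMcard])
    have hψinj : Function.Injective ψ :=
      (Finite.injective_iff_surjective_of_equiv eM).2 hψsurj
    intro i
    obtain ⟨m, hm, hm1, hm2⟩ := exists_meetIrred (x i.castSucc) (x i.succ) (hcov i).lt
    refine ⟨m, hm, hm1, hm2, ?_⟩
    intro m' hm' h1 h2
    have : ψ ⟨m', hm'⟩ = ψ ⟨m, hm⟩ := by
      rw [hψchar ⟨m', hm'⟩ i h1 h2, hψchar ⟨m, hm⟩ i hm1 hm2]
    exact congrArg Subtype.val (hψinj this)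
  set jj : Fin n → α := fun i => (hjj i).choose with hjjdef
  have hjjP : ∀ i : Fin n, JoinIrred (jj i) ∧ jj i ≤ x i.succ ∧ ¬ jj i ≤ x i.castSucc :=
    fun i => ⟨(hjj i).choose_spec.1, (hjj i).choose_spec.2.1, (hjj i).choose_spec.2.2.1⟩
  have hjjU : ∀ (i : Fin n) (j' : α), JoinIrred j' → j' ≤ x i.succ → ¬ j' ≤ x i.castSucc →
      j' = jj i := fun i => (hjj i).choose_spec.2.2.2
  set mm : Fin n → α := fun i => (hmm i).choose with hmmdef
  have hmmP : ∀ i : Fin n, MeetIrred (mm i) ∧ x i.castSucc ≤ mm i ∧ ¬ x i.succ ≤ mm i :=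
    fun i => ⟨(hmm i).choose_spec.1, (hmm i).choose_spec.2.1, (hmm i).choose_spec.2.2.1⟩
  have hmmU : ∀ (i : Fin n) (m' : α), MeetIrred m' → x i.castSucc ≤ m' → ¬ x i.succ ≤ m' →
      m' = mm i := fun i => (hmm i).choose_spec.2.2.2
  -- the two irreducibles at a level are incomparable
  have hdisj : ∀ i : Fin n, ¬ jj i ≤ mm i := by
    intro i hle
    have h1 : x i.castSucc ⊔ jj i ≤ x i.succ :=
      sup_le (hxs (Fin.castSucc_lt_succ (i := i))).le (hjjP i).2.1
    have h2 : x i.castSucc < x i.castSucc ⊔ jj i := left_lt_sup.2 (hjjP i).2.2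
    have heq : x i.castSucc ⊔ jj i = x i.succ := by
      rcases h1.lt_or_eq with hlt | heq
      · exact absurd hlt ((hcov i).2 h2)
      · exact heq
    exact (hmmP i).2.2 (heq ▸ sup_le (hmmP i).2.1 hle)
  -- Structure of the maximal chain C
  haveI : Fintype ↥C := (Set.toFinite C).fintype
  letI : LinearOrder ↥C :=
    { Subtype.partialOrder _ with
      le_total := fun u v => by
        rcases eq_or_ne (u : α) (v : α) with hh | hh
        · exact Or.inl hh.le
        · exact hCch u.2 v.2 hh
      toDecidableLE := Classical.decRel _ }
  have hcardC : Nat.card ↥C = C.ncard := Nat.card_coe_set_eq C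
  have hgeC : n + 1 ≤ C.ncard := by
    have hchX : IsChain (· ≤ ·) (Set.range x) := by
      rintro _ ⟨i, rfl⟩ _ ⟨i', rfl⟩ _
      exact (le_total i i').imp (fun hh => hxm hh) (fun hh => hxm hh)
    have hrX : (Set.range x).ncard = n + 1 := by
      have h1 : Nat.card ↥(Set.range x) = Nat.card (Fin (n + 1)) :=
        Nat.card_congr (Equiv.ofInjective x hxs.injective).symm
      rw [← Nat.card_coe_set_eq, h1, Nat.card_eq_fintype_card, Fintype.card_fin]
    calc n + 1 = (Set.range x).ncard := hrX.symm
      _ ≤ C.ncard := hCmax _ hchX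
  obtain ⟨N, hN⟩ : ∃ N : ℕ, Fintype.card ↥C = N + 1 := by
    have hpos : 0 < Fintype.card ↥C := Fintype.card_pos_iff.2 ⟨⟨a, haC⟩⟩
    exact ⟨Fintype.card ↥C - 1, (Nat.succ_pred_eq_of_pos hpos).symm⟩
  set e := monoEquivOfFin ↥C hN with hedef
  set c : Fin (N + 1) → α := fun t => (e t : α) with hcdef
  have hc : StrictMono c := fun s t hst => Subtype.coe_lt_coe.2 (e.strictMono hst)
  have hcm : Monotone c := hc.monotone
  -- N = n
  have hNn : N = n := by
    have hle : N ≤ n := by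
      have hstep : ∀ t : Fin N, ∃ j : α, JoinIrred j ∧ j ≤ c t.succ ∧ ¬ j ≤ c t.castSucc :=
        fun t => exists_joinIrred _ _ (hc (Fin.castSucc_lt_succ (i := t)))
      set W : Fin N → {v : α // JoinIrred v} :=
        fun t => ⟨(hstep t).choose, (hstep t).choose_spec.1⟩ with hWdef
      have hWinj : Function.Injective W := by
        have key : ∀ s t : Fin N, (s : ℕ) < (t : ℕ) → W s ≠ W t := by
          intro s t hst heq
          have h1 : (hstep s).choose ≤ c t.castSucc :=
            (hstep s).choose_spec.2.1.trans (hcm (fin_succ_le_castSucc hst))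
          have h2 : (hstep s).choose = (hstep t).choose := congrArg Subtype.val heq
          exact (hstep t).choose_spec.2.2 (h2 ▸ h1)
        intro s t heq
        by_contra hne
        have : (s : ℕ) ≠ (t : ℕ) := fun hh => hne (Fin.ext hh)
        rcases this.lt_or_gt with hh | hh
        · exact key s t hh heq
        · exact key t s hh heq.symm
      have := Nat.card_le_card_of_injective W hWinj
      rwa [Nat.card_eq_fintype_card, Fintype.card_fin, hJcard] at this
    have hge : n ≤ N := by
      have h2 : Nat.card ↥C = N + 1 := by rw [Nat.card_eq_fintype_card, hN]
      have h3 : C.ncard = N + 1 := by rw [← hcardC, h2]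
      omega
    omega
  subst hNn
  -- the index of a
  set k : Fin (N + 1) := e.symm ⟨a, haC⟩ with hkdef
  have hak : c k = a := by
    simp only [hcdef, hkdef, OrderIso.apply_symm_apply]
  -- The covering property: every level has its irreducible on the correct side of a
  have STcover : ∀ i : Fin N, jj i ≤ a ∨ a ≤ mm i := by
    have hG : ∀ t : Fin N, ∃ i : Fin N,
        (((t : ℕ) < (k : ℕ)) → (jj i ≤ a ∧ jj i ≤ c t.succ ∧ ¬ jj i ≤ c t.castSucc)) ∧
        ((¬ ((t : ℕ) < (k : ℕ))) → (a ≤ mm i ∧ c t.castSucc ≤ mm i ∧ ¬ c t.succ ≤ mm i)) := by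
      intro t
      by_cases hside : (t : ℕ) < (k : ℕ)
      · obtain ⟨j, hj, hj1, hj2⟩ := exists_joinIrred _ _ (hc (Fin.castSucc_lt_succ (i := t)))
        obtain ⟨i, hi1, hi2⟩ := hlevJ j hj
        have hjeq : j = jj i := hjjU i j hj hi2 hi1
        have hsucck : (t.succ : Fin (N + 1)) ≤ k := by
          rw [Fin.le_def]; simpa using hside
        have hja : j ≤ a := hj1.trans ((hcm hsucck).trans hak.le)
        refine ⟨i, fun _ => ⟨hjeq ▸ hja, hjeq ▸ hj1, hjeq ▸ hj2⟩, fun hcon => absurd hside hcon⟩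
      · obtain ⟨m, hm, hm1, hm2⟩ := exists_meetIrred _ _ (hc (Fin.castSucc_lt_succ (i := t)))
        obtain ⟨i, hi1, hi2⟩ := hlevM m hm
        have hmeq : m = mm i := hmmU i m hm hi1 hi2
        have hkcs : k ≤ (t.castSucc : Fin (N + 1)) := by
          rw [Fin.le_def]; simp; omega
        have hma : a ≤ m := (hak ▸ hcm hkcs).trans hm1
        exact ⟨i, fun hcon => absurd hcon hside, fun _ => ⟨hmeq ▸ hma, hmeq ▸ hm1, hmeq ▸ hm2⟩⟩
    set G : Fin N → Fin N := fun t => (hG t).choose with hGdef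
    have hGspec := fun t => (hG t).choose_spec
    have hGinj : Function.Injective G := by
      have key : ∀ s t : Fin N, (s : ℕ) < (t : ℕ) → G s = G t → False := by
        intro s t hst heq
        by_cases h1 : (s : ℕ) < (k : ℕ) <;> by_cases h2 : (t : ℕ) < (k : ℕ)
        · -- both below a
          have hsP := (hGspec s).1 h1
          have htP := (hGspec t).1 h2
          have : jj (G s) ≤ c t.castSucc := hsP.2.1.trans (hcm (fin_succ_le_castSucc hst))
          rw [heq] at this
          exact htP.2.2 this
        · -- s below, t above
          have hsP := (hGspec s).1 h1
          have htP := (hGspec t).2 h2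
          exact hdisj (G s) (hsP.1.trans (heq ▸ htP.1))
        · -- s above, t below: impossible
          omega
        · -- both above a
          have hsP := (hGspec s).2 h1
          have htP := (hGspec t).2 h2
          have : c s.succ ≤ mm (G t) := (hcm (fin_succ_le_castSucc hst)).trans htP.2.1
          rw [← heq] at this
          exact hsP.2.2 this
      intro s t heq
      by_contra hne
      have : (s : ℕ) ≠ (t : ℕ) := fun hh => hne (Fin.ext hh)
      rcases this.lt_or_gt with hh | hh
      · exact key s t hh heq
      · exact key t s hh heq.symm
    have hGsurj : Function.Surjective G := Finite.injective_iff_surjective.1 hGinj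
    intro i
    obtain ⟨t, ht⟩ := hGsurj i
    by_cases hside : (t : ℕ) < (k : ℕ)
    · exact Or.inl (ht ▸ ((hGspec t).1 hside).1)
    · exact Or.inr (ht ▸ ((hGspec t).2 hside).1)
  -- Pentagon elimination
  have pent : ∀ Y Z : α, Y < Z → a ⊓ Y = a ⊓ Z → a ⊔ Y = a ⊔ Z → False := by
    intro Y Z hYZ hmeet hjoin
    -- first crossing: for x i ⊓ Z ≤ Y
    have hPmono : ∀ i i' : Fin (N + 1), i ≤ i' → ¬ x i ⊓ Z ≤ Y → ¬ x i' ⊓ Z ≤ Y :=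
      fun i i' hii' hP hc => hP ((inf_le_inf_right Z (hxm hii')).trans hc)
    obtain ⟨i, hic, his⟩ := crossing (P := fun i => ¬ x i ⊓ Z ≤ Y) hPmono
      (not_not.2 (inf_le_left.trans (hbot Y)))
      (fun hc => hYZ.not_ge ((inf_eq_right.2 (htop Z)) ▸ hc))
    have hic' : x i.castSucc ⊓ Z ≤ Y := not_not.1 hic
    set Z1 : α := Y ⊔ (x i.succ ⊓ Z) with hZ1def
    have hZ1Z : Z1 ≤ Z := sup_le hYZ.le inf_le_right
    have hYZ1 : Y < Z1 := left_lt_sup.2 (fun hc => his hc)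
    have hmeet1 : a ⊓ Z1 = a ⊓ Y := by
      refine le_antisymm ?_ (inf_le_inf_left a hYZ1.le)
      calc a ⊓ Z1 ≤ a ⊓ Z := inf_le_inf_left a hZ1Z
        _ = a ⊓ Y := hmeet.symm
    have hjoin1 : a ⊔ Z1 = a ⊔ Y := by
      refine le_antisymm ?_ (sup_le_sup_left hYZ1.le a)
      calc a ⊔ Z1 ≤ a ⊔ Z := sup_le_sup_left hZ1Z a
        _ = a ⊔ Y := hjoin.symm
    -- second crossing: for Z1 ≤ x l ⊔ Y
    have hQmono : ∀ i i' : Fin (N + 1), i ≤ i' → Z1 ≤ x i ⊔ Y → Z1 ≤ x i' ⊔ Y :=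
      fun i i' hii' hP => hP.trans (sup_le_sup_right (hxm hii') Y)
    obtain ⟨l, hlc, hls⟩ := crossing (P := fun i => Z1 ≤ x i ⊔ Y) hQmono
      (fun hc => hYZ1.not_ge ((sup_eq_right.2 (hbot Y)) ▸ hc))
      ((htop Z1).trans le_sup_left)
    -- l ≤ i
    have hQi : Z1 ≤ x i.succ ⊔ Y := sup_le le_sup_right (inf_le_left.trans le_sup_left)
    have hli : (l : ℕ) ≤ (i : ℕ) := by
      by_contra hcon
      push_neg at hcon
      exact hlc (hQmono _ _ (fin_succ_le_castSucc hcon) hQi)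
    rcases hli.lt_or_eq with hlt | heq
    · -- case l < i : contradicts left modularity of x l.succ
      have h1 : x l.succ ⊓ Z ≤ Y := by
        have : (l.succ : Fin (N + 1)) ≤ i.castSucc := fin_succ_le_castSucc hlt
        exact (inf_le_inf_right Z (hxm this)).trans hic'
      have h2 : x l.succ ⊓ Z1 ≤ Y := (inf_le_inf_left _ hZ1Z).trans h1
      have hlm := hLM l.succ Y Z1 hYZ1
      have hL : (Y ⊔ x l.succ) ⊓ Z1 = Z1 := inf_eq_right.2 (hls.trans (sup_comm _ _).le)
      have hR : Y ⊔ (x l.succ ⊓ Z1) = Y := sup_eq_left.2 h2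
      rw [hL, hR] at hlm
      exact hYZ1.ne' hlm
    · -- case l = i : contradicts STcover
      have hleq : l = i := Fin.ext heq
      subst hleq
      -- extract the join-irreducible at level l
      have hu : ¬ x l.succ ⊓ Z1 ≤ Y := by
        intro hcon
        exact his (le_trans (le_inf inf_le_left (le_sup_right)) hcon)
      obtain ⟨j, hj, hj1, hj2⟩ := exists_joinIrred (x l.succ ⊓ Z1) ((x l.succ ⊓ Z1) ⊓ Y)
        (lt_of_le_of_ne inf_le_left fun hh => hu (hh ▸ inf_le_right))
      have hjY : ¬ j ≤ Y := fun hh => hj2 (le_inf hj1 hh)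
      have hjcs : ¬ j ≤ x l.castSucc := by
        intro hh
        exact hjY (le_trans (le_inf hh (hj1.trans inf_le_right)) ((inf_le_inf_right Z1 le_rfl).trans
          ((inf_le_inf_left _ hZ1Z).trans hic')))
      have hjeq : j = jj l := hjjU l j hj (hj1.trans inf_le_left) hjcs
      have hja : ¬ jj l ≤ a := by
        intro hcon
        apply hjY
        calc j ≤ a ⊓ Z1 := le_inf (hjeq ▸ hcon) (hj1.trans inf_le_right)
          _ = a ⊓ Y := hmeet1
          _ ≤ Y := inf_le_right
      -- extract the meet-irreducible at level l
      obtain ⟨m, hm, hm1, hm2⟩ := exists_meetIrred (x l.castSucc ⊔ Y) ((x l.castSucc ⊔ Y) ⊔ Z1)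
        (left_lt_sup.2 hlc)
      have hmZ1 : ¬ Z1 ≤ m := fun hh => hm2 (sup_le hm1 hh)
      have hmcs : x l.castSucc ≤ m := le_sup_left.trans hm1
      have hmss : ¬ x l.succ ≤ m := by
        intro hh
        exact hmZ1 (hls.trans (sup_le hh (le_sup_right.trans hm1)))
      have hmeq : m = mm l := hmmU l m hm hmcs hmss
      have hma : ¬ a ≤ mm l := by
        intro hcon
        apply hmZ1
        calc Z1 ≤ a ⊔ Z1 := le_sup_right
          _ = a ⊔ Y := hjoin1
          _ ≤ m := sup_le (hmeq ▸ hcon) (le_sup_right.trans hm1)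
      rcases STcover l with hcase | hcase
      · exact hja hcase
      · exact hma hcase
  -- conclude left modularity
  intro y z hyz
  set u : α := y ⊔ (a ⊓ z) with hudef
  set v : α := (y ⊔ a) ⊓ z with hvdef
  have huv : u ≤ v := le_inf (sup_le (le_sup_left.trans le_rfl)
    (le_trans inf_le_left le_sup_right)) (sup_le hyz.le inf_le_right)
  rcases huv.lt_or_eq with hlt | heq
  · exfalso
    have hmeet : a ⊓ u = a ⊓ v := by
      refine le_antisymm (inf_le_inf_left a huv) ?_
      exact le_inf inf_le_left ((inf_le_inf_left a inf_le_right).trans le_sup_right)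
    have hjoin : a ⊔ u = a ⊔ v := by
      refine le_antisymm (sup_le_sup_left huv a) ?_
      exact sup_le le_sup_left
        (inf_le_left.trans (sup_le (le_sup_left.trans le_sup_right) le_sup_left))
    exact pent u v hlt hmeet hjoin
  · exact heq.symm
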